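/- arXiv:2506.04206 — 2 statements merged into one kernel-verified Lean document; each statement's English description precedes it below -/
import Mathlib

section
/- Let T be the integral operator on functions on [0,1] with kernel W(x,y) = x·y, i.e., (Tf)(x) = ∫_0^1 x·y·f(y) dy, and let 𝟙 denote the constant function 1. Then for every integer j ≥ 1 and every x ∈ [0,1], (T^j 𝟙)(x) = x/(2·3^{j−1}); moreover, for every α ∈ (0,3) and every x ∈ [0,1], the Katz series converges and ∑_{j=1}^∞ α^j (T^j 𝟙)(x) = 3αx/(2(3−α)), so that 1 + ∑_{j=1}^∞ α^j (T^j 𝟙)(x) = ((6−2α) + 3αx)/(6−2α), a positive scalar multiple of the paper's Katz centrality formula C^k_α(x) = (6−2α) + 3αx. -/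
open MeasureTheory

noncomputable def T (f : ℝ → ℝ) : ℝ → ℝ :=
  fun x => ∫ y in Set.Icc (0 : ℝ) 1, x * y * f y

lemma Tlin (c x : ℝ) : T (fun y => y * c) x = x * c / 3 := by
  unfold T
  have h : ∀ y : ℝ, x * y * (y * c) = (x * c) * y ^ 2 := fun y => by ring
  simp only [h]
  rw [MeasureTheory.integral_const_mul, integral_Icc_eq_integral_Ioc,
    ← intervalIntegral.integral_of_le (zero_le_one)]
  simp [integral_pow]
  ring

lemma Tone (x : ℝ) : T (fun _ => 1) x = x / 2 := by
  unfold T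
  simp only [mul_one]
  rw [MeasureTheory.integral_const_mul, integral_Icc_eq_integral_Ioc,
    ← intervalIntegral.integral_of_le (zero_le_one), integral_id]
  ring

lemma Titer (j : ℕ) (x : ℝ) : (T^[j + 1] (fun _ => 1)) x = x / (2 * 3 ^ j) := by
  induction j generalizing x with
  | zero => simpa using Tone x
  | succ n ih =>
    rw [Function.iterate_succ_apply']
    have hfun : (T^[n + 1] (fun _ => 1)) = fun y => y * (1 / (2 * 3 ^ n)) := by
      funext y; rw [ih y]; ring
    rw [hfun, Tlin]
    ring

/-- Katz centrality of the graphon `W(x,y) = x·y`: `(T^j 𝟙)(x) = x / (2·3^{j−1})` for all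
`j ≥ 1`, and for `α ∈ (0,3)` the Katz series converges with
`∑_{j≥1} α^j (T^j 𝟙)(x) = 3αx / (2(3−α))`, so that
`1 + ∑_{j≥1} α^j (T^j 𝟙)(x) = ((6−2α) + 3αx)/(6−2α)`, a positive scalar multiple of the
paper's Katz centrality formula `C^k_α(x) = (6−2α) + 3αx`. -/
theorem katz_centrality_xy :
    (∀ j : ℕ, 1 ≤ j → ∀ x ∈ Set.Icc (0 : ℝ) 1,
      (T^[j] (fun _ => 1)) x = x / (2 * 3 ^ (j - 1))) ∧
    ∀ α ∈ Set.Ioo (0 : ℝ) 3, ∀ x ∈ Set.Icc (0 : ℝ) 1,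
      HasSum (fun j : ℕ => α ^ (j + 1) * (T^[j + 1] (fun _ => 1)) x)
        (3 * α * x / (2 * (3 - α))) ∧
      1 + 3 * α * x / (2 * (3 - α)) = ((6 - 2 * α) + 3 * α * x) / (6 - 2 * α) := by
  constructor
  · intro j hj x _
    obtain ⟨n, rfl⟩ := Nat.exists_eq_add_of_le hj
    simpa [add_comm] using Titer n x
  · rintro α ⟨hα0, hα3⟩ x _
    constructor
    · have hr : |α / 3| < 1 := by
        rw [abs_div]
        rw [abs_of_pos hα0]
        norm_num
        linarith
      have hgeo : HasSum (fun j : ℕ => (α / 3) ^ j) ((1 - α / 3)⁻¹) :=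
        hasSum_geometric_of_abs_lt_one hr
      have hs := hgeo.mul_left (α * x / 2)
      have h3 : (3 : ℝ) - α ≠ 0 := by linarith
      have h3' : (1 : ℝ) - α / 3 ≠ 0 := by intro h; apply h3; linarith [h]
      have hval : 3 * α * x / (2 * (3 - α)) = α * x / 2 * (1 - α / 3)⁻¹ := by
        field_simp
      rw [hval]
      rw [show (fun j : ℕ => α ^ (j + 1) * (T^[j + 1] (fun _ => 1)) x) =
        fun i => α * x / 2 * (α / 3) ^ i from ?_]
      · exact hs
      funext j
      rw [Titer j x]
      rw [div_pow]
      field_simp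
      ring
    · have h : (6 : ℝ) - 2 * α ≠ 0 := by linarith
      have h3 : (2 : ℝ) * (3 - α) ≠ 0 := by intro hh; apply h; linarith
      rw [eq_div_iff h]
      field_simp
      ring
end

section
/- Let β ∈ [0,1) and define C : [0,1] → ℝ by C(x) = (1−β) + 2βx. Then C satisfies the graphon PageRank fixed-point equation for the graphon W(x,y) = x·y with degree function d(y) = ∫_0^1 W(y,z) dz = y/2: for every x ∈ [0,1], C(x) = (1−β) + β ∫_{(0,1]} ( (x·y) · C(y) / (y/2) ) dy, where the integrand equals 2x·C(y) for y ∈ (0,1]. -/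
open MeasureTheory

/-- PageRank centrality of the graphon `W(x,y) = x·y` with degree function `d(y) = y/2`:
the function `C(x) = (1−β) + 2βx` satisfies the graphon PageRank fixed-point equation
`C(x) = (1−β) + β ∫_{(0,1]} W(x,y)·C(y)/d(y) dy`, whose integrand equals `2x·C(y)` on
`(0,1]`. -/
theorem pagerank_centrality_xy (β : ℝ) (hβ : β ∈ Set.Ico (0 : ℝ) 1) :
    (∀ y ∈ Set.Ioc (0 : ℝ) 1, ∀ x : ℝ,
      (x * y) * ((1 - β) + 2 * β * y) / (y / 2) = 2 * x * ((1 - β) + 2 * β * y)) ∧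
    ∀ x ∈ Set.Icc (0 : ℝ) 1,
      (1 - β) + 2 * β * x =
        (1 - β) + β * ∫ y in Set.Ioc (0 : ℝ) 1,
          (x * y) * ((1 - β) + 2 * β * y) / (y / 2) := by
  have key : ∀ y ∈ Set.Ioc (0 : ℝ) 1, ∀ x : ℝ,
      (x * y) * ((1 - β) + 2 * β * y) / (y / 2) = 2 * x * ((1 - β) + 2 * β * y) := by
    intro y hy x
    have hy0 : y ≠ 0 := ne_of_gt hy.1
    field_simp
  refine ⟨key, fun x hx => ?_⟩
  have hcong : (∫ y in Set.Ioc (0 : ℝ) 1,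
      (x * y) * ((1 - β) + 2 * β * y) / (y / 2))
      = ∫ y in Set.Ioc (0 : ℝ) 1, 2 * x * ((1 - β) + 2 * β * y) := by
    apply setIntegral_congr_fun measurableSet_Ioc
    intro y hy
    exact key y hy x
  rw [hcong, ← intervalIntegral.integral_of_le (by norm_num : (0:ℝ) ≤ 1)]
  have h1 : (∫ y in (0:ℝ)..1, ((1 - β) + 2 * β * y)) = 1 := by
    have hint : IntervalIntegrable (fun y : ℝ => 2 * β * y) volume 0 1 :=
      Continuous.intervalIntegrable (by continuity) 0 1
    rw [intervalIntegral.integral_add intervalIntegrable_const hint,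
      intervalIntegral.integral_const_mul, integral_id]
    simp
    ring
  have : (∫ y in (0:ℝ)..1, 2 * x * ((1 - β) + 2 * β * y)) = 2 * x := by
    rw [intervalIntegral.integral_const_mul, h1]; ring
  rw [this]
  ring
end
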